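/- Let R be a commutative Noetherian ring, D a bounded chain complex of injective R-modules (D_n is injective for all n, and D_n = 0 for all but finitely many n), and F a chain complex of flat R-modules. Then every component of the tensor product complex D ⊗ F, namely (D ⊗ F)_n = ⊕_{i+j=n} D_i ⊗_R F_j, is an injective R-module. -/

import Mathlib

/-!
STATEMENT 13: Let `R` be a commutative Noetherian ring, `D` a bounded chain complex of
injective `R`-modules, and `F` a chain complex of flat `R`-modules.  Then every component
`(D ⊗ F) n = ⊕_{i + j = n} D i ⊗[R] F j` of the tensor product complex is an injective
`R`-module.
-/

universe u

open CategoryTheory MonoidalCategory Limits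

/-- Koszul signs for `ℤ`-indexed chain complexes, making `Ch(C)` monoidal. -/
instance : (ComplexShape.down ℤ).TensorSigns where
  ε' := MonoidHom.mk' Int.negOnePow Int.negOnePow_add
  rel_add p q r (hpq : q + 1 = p) := by show q + r + 1 = p + r; omega
  add_rel p q r (hpq : q + 1 = p) := by show r + q + 1 = r + p; omega
  ε'_succ p q (hpq : q + 1 = p) := by
    subst hpq
    show Int.negOnePow q = - Int.negOnePow (q + 1)
    rw [Int.negOnePow_succ, neg_neg]

variable {R : Type u} [CommRing R]

instance : (curriedTensor (ModuleCat.{u} R)).Additive where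
  map_add := by
    intros
    ext Z
    simp [curriedTensor]

open TensorProduct

private lemma theta_natural {R : Type u} [CommRing R]
    {N N' E M : Type u} [AddCommGroup N] [Module R N] [AddCommGroup N'] [Module R N']
    [AddCommGroup E] [Module R E] [AddCommGroup M] [Module R M]
    (h : N' →ₗ[R] N) (t : (N →ₗ[R] E) ⊗[R] M) :
    TensorProduct.rTensorHomToHomRTensor (RingHom.id R) N' E M
      (LinearMap.rTensor M (LinearMap.lcomp R E h) t) =
      (TensorProduct.rTensorHomToHomRTensor (RingHom.id R) N E M t).comp h := by
  induction t with
  | zero => simp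
  | tmul φ m =>
      ext x
      simp [TensorProduct.rTensorHomToHomRTensor_apply]
  | add a b ha hb => simp [ha, hb, LinearMap.add_comp]

private lemma hom_exact {R : Type u} [CommRing R]
    {A B N E : Type u} [AddCommGroup A] [Module R A] [AddCommGroup B] [Module R B]
    [AddCommGroup N] [Module R N] [AddCommGroup E] [Module R E]
    (f : A →ₗ[R] B) (p : B →ₗ[R] N) (hp : Function.Surjective p)
    (hexact : LinearMap.range f = LinearMap.ker p) :
    Function.Exact (LinearMap.lcomp R E p) (LinearMap.lcomp R E f) := by
  intro ψ
  constructor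
  · intro h0
    have hker : LinearMap.ker p ≤ LinearMap.ker ψ := by
      rw [← hexact]
      rintro _ ⟨y, rfl⟩
      simpa using DFunLike.congr_fun h0 y
    refine ⟨((LinearMap.ker p).liftQ ψ hker).comp
      (p.quotKerEquivOfSurjective hp).symm.toLinearMap, ?_⟩
    ext x
    have : (p.quotKerEquivOfSurjective hp).symm (p x) = Submodule.Quotient.mk x := by
      apply (p.quotKerEquivOfSurjective hp).injective
      simp [LinearMap.quotKerEquivOfSurjective]
    simp [LinearMap.lcomp_apply, this]
  · rintro ⟨χ, rfl⟩
    ext x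
    have : p (f x) = 0 := by rw [← LinearMap.mem_ker, ← hexact]; exact ⟨x, rfl⟩
    simp [LinearMap.lcomp_apply, this]

private lemma theta_surjective {R : Type u} [CommRing R] [IsNoetherianRing R]
    (N E M : Type u) [AddCommGroup N] [Module R N] [AddCommGroup E] [Module R E]
    [AddCommGroup M] [Module R M] [Module.Finite R N] [Module.Flat R M] :
    Function.Surjective (TensorProduct.rTensorHomToHomRTensor (RingHom.id R) N E M) := by
  classical
  obtain ⟨n, p, hp⟩ := Module.Finite.exists_fin' R N
  have hfinker : Module.Finite R (LinearMap.ker p) := by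
    rw [Module.Finite.iff_fg]; exact IsNoetherian.noetherian _
  obtain ⟨m, q, hq⟩ := Module.Finite.exists_fin' R ↥(LinearMap.ker p)
  set f : (Fin m → R) →ₗ[R] (Fin n → R) := (LinearMap.ker p).subtype.comp q with hf
  have hrange : LinearMap.range f = LinearMap.ker p := by
    rw [hf, LinearMap.range_comp, LinearMap.range_eq_top.mpr hq, Submodule.map_top,
      Submodule.range_subtype]
  have bijn : Function.Bijective (TensorProduct.rTensorHomToHomRTensor (RingHom.id R) (Fin n → R) E M) := by
    rw [← rTensorHomEquivHomRTensor_toLinearMap]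
    exact (rTensorHomEquivHomRTensor R (Fin n → R) E M).bijective
  have bijm : Function.Bijective (TensorProduct.rTensorHomToHomRTensor (RingHom.id R) (Fin m → R) E M) := by
    rw [← rTensorHomEquivHomRTensor_toLinearMap]
    exact (rTensorHomEquivHomRTensor R (Fin m → R) E M).bijective
  intro g
  obtain ⟨u, hu⟩ := bijn.2 (g.comp p)
  have hzero : LinearMap.rTensor M (LinearMap.lcomp R E f) u = 0 := by
    apply bijm.1
    rw [theta_natural, hu, map_zero]
    have hpf : p.comp f = 0 := by
      apply LinearMap.ext; intro x
      have : f x ∈ LinearMap.ker p := hrange ▸ ⟨x, rfl⟩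
      simpa using this
    rw [LinearMap.comp_assoc, hpf, LinearMap.comp_zero]
  have htex := Module.Flat.rTensor_exact (M := M) (hom_exact (E := E) f p hp hrange)
  obtain ⟨v, hv⟩ := (htex u).mp hzero
  refine ⟨v, ?_⟩
  have hinj : Function.Injective (fun ψ : N →ₗ[R] E ⊗[R] M => ψ.comp p) := by
    intro ψ₁ ψ₂ hψ
    ext y
    obtain ⟨x, rfl⟩ := hp y
    exact DFunLike.congr_fun hψ x
  apply hinj
  show (TensorProduct.rTensorHomToHomRTensor (RingHom.id R) N E M v).comp p = g.comp p
  rw [← theta_natural, hv, hu]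

/-- Over a Noetherian ring, the tensor product of an injective module with a flat
module is injective. -/
private lemma injective_tensor_flat {R : Type u} [CommRing R] [IsNoetherianRing R]
    (E M : Type u) [AddCommGroup E] [Module R E] [AddCommGroup M] [Module R M]
    [Module.Injective R E] [Module.Flat R M] :
    Module.Injective R (E ⊗[R] M) := by
  apply Module.Baer.injective
  intro I g
  have : Module.Finite R ↥I := Module.Finite.iff_fg.mpr (IsNoetherian.noetherian I)
  obtain ⟨v, hv⟩ := theta_surjective (↥I) E M g
  have hres : Function.Surjective (LinearMap.lcomp R E I.subtype) := by
    intro φ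
    obtain ⟨φ', hφ'⟩ := (Module.Baer.of_injective (inferInstance : Module.Injective R E)) I φ
    exact ⟨φ', by ext x; exact hφ' x.1 x.2⟩
  obtain ⟨w, hw⟩ := LinearMap.rTensor_surjective M hres v
  refine ⟨TensorProduct.rTensorHomToHomRTensor (RingHom.id R) R E M w, fun x hx => ?_⟩
  have hnat := theta_natural (R := R) (E := E) (M := M) I.subtype w
  rw [hw, hv] at hnat
  exact (DFunLike.congr_fun hnat ⟨x, hx⟩).symm

private lemma injective_sigma_of_finite {C : Type*} [Category C] [Preadditive C]
    {ι : Type*} (c : ι → C) [HasCoproduct c] [∀ b, Injective (c b)]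
    (hfin : {b | ¬ IsZero (c b)}.Finite) : Injective (∐ c) := by
  classical
  set S := hfin.toFinset with hS
  let proj : ∀ b, (∐ c) ⟶ c b := fun b =>
    Sigma.desc (fun b' => if h : b' = b then eqToHom (by rw [h]) else 0)
  have hproj_self : ∀ b, Sigma.ι c b ≫ proj b = 𝟙 (c b) := by
    intro b; simp [proj]
  have hproj_ne : ∀ b' b, b' ≠ b → Sigma.ι c b' ≫ proj b = 0 := by
    intro b' b h; simp [proj, h]
  have hid : (∑ b ∈ S, proj b ≫ Sigma.ι c b) = 𝟙 (∐ c) := by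
    ext b'
    rw [Preadditive.comp_sum, Category.comp_id]
    by_cases hb : b' ∈ S
    · rw [Finset.sum_eq_single b']
      · rw [← Category.assoc, hproj_self, Category.id_comp]
      · intro b _ hne
        rw [← Category.assoc, hproj_ne b' b (Ne.symm hne), zero_comp]
      · exact fun h => absurd hb h
    · have hz : IsZero (c b') := by
        by_contra h
        exact hb (hS ▸ hfin.mem_toFinset.mpr h)
      apply hz.eq_of_src
  constructor
  intro A B g f hf
  refine ⟨∑ b ∈ S, Injective.factorThru (g ≫ proj b) f ≫ Sigma.ι c b, ?_⟩
  rw [Preadditive.comp_sum]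
  have : ∀ b ∈ S, f ≫ Injective.factorThru (g ≫ proj b) f ≫ Sigma.ι c b
      = g ≫ (proj b ≫ Sigma.ι c b) := by
    intro b _
    rw [← Category.assoc, Injective.comp_factorThru, Category.assoc]
  rw [Finset.sum_congr rfl this, ← Preadditive.comp_sum, hid, Category.comp_id]

private lemma subsingleton_tensor {R : Type u} [CommRing R] (E M : Type u)
    [AddCommGroup E] [Module R E] [AddCommGroup M] [Module R M] [Subsingleton E] :
    Subsingleton (E ⊗[R] M) := by
  refine subsingleton_of_forall_eq 0 fun x => ?_
  induction x with
  | zero => rfl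
  | tmul e m => rw [Subsingleton.elim e 0, TensorProduct.zero_tmul]
  | add a b ha hb => rw [ha, hb, add_zero]

theorem injective_components_of_tensor_bounded_injectives_with_flats
    [IsNoetherianRing R]
    (D F : ChainComplex (ModuleCat.{u} R) ℤ)
    (hDinj : ∀ n, Module.Injective R (D.X n))
    (hDbdd : {n : ℤ | ¬ IsZero (D.X n)}.Finite)
    (hFflat : ∀ n, Module.Flat R (F.X n)) (n : ℤ) :
    Module.Injective R ((HomologicalComplex.tensorObj D F).X n) := by
  classical
  let K := (((curriedTensor (ModuleCat.{u} R)).mapBifunctorHomologicalComplex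
      (ComplexShape.down ℤ) (ComplexShape.down ℤ)).obj D).obj F
  let π := ComplexShape.π (ComplexShape.down ℤ) (ComplexShape.down ℤ) (ComplexShape.down ℤ)
  let c : ↥(π ⁻¹' {n}) → ModuleCat.{u} R := K.toGradedObject.mapObjFun π n
  haveI hinj : ∀ b, Injective (c b) := by
    rintro ⟨⟨i, j⟩, hb⟩
    haveI := hDinj i
    haveI := hFflat j
    haveI : Module.Injective R ((D.X i : Type u) ⊗[R] (F.X j : Type u)) :=
      injective_tensor_flat _ _
    exact Module.injective_object_of_injective_module R ((D.X i : Type u) ⊗[R] (F.X j : Type u))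
  have hfin : {b : ↥(π ⁻¹' {n}) | ¬ IsZero (c b)}.Finite := by
    have hm : Function.Injective (fun b : ↥(π ⁻¹' {n}) => b.1.1) := by
      rintro ⟨⟨i, j⟩, hb⟩ ⟨⟨i', j'⟩, hb'⟩ h
      simp only at h
      subst h
      have : i + j = n := hb
      have : i + j' = n := hb'
      have : j = j' := by omega
      subst this
      rfl
    have hsub : {b : ↥(π ⁻¹' {n}) | ¬ IsZero (c b)} ⊆
        (fun b : ↥(π ⁻¹' {n}) => b.1.1) ⁻¹' {m : ℤ | ¬ IsZero (D.X m)} := by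
      rintro ⟨⟨i, j⟩, hb⟩ hcb
      simp only [Set.mem_preimage, Set.mem_setOf_eq]
      intro hz
      apply hcb
      have : Subsingleton (D.X i : Type u) := by
        refine subsingleton_of_forall_eq 0 fun x => ?_
        have h01 : (𝟙 (D.X i) : D.X i ⟶ D.X i) = 0 := hz.eq_of_src _ _
        exact (DFunLike.congr_fun (congrArg ModuleCat.Hom.hom h01) x : _)
      haveI := this
      haveI : Subsingleton ((D.X i : Type u) ⊗[R] (F.X j : Type u)) :=
        subsingleton_tensor _ _
      exact ModuleCat.isZero_of_subsingleton
        (ModuleCat.of R ((D.X i : Type u) ⊗[R] (F.X j : Type u)))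
    exact (hDbdd.preimage hm.injOn).subset hsub
  have key : Injective ((HomologicalComplex.tensorObj D F).X n) := by
    show Injective (∐ c)
    exact injective_sigma_of_finite c hfin
  haveI : Injective (ModuleCat.of R ((HomologicalComplex.tensorObj D F).X n)) := key
  exact Module.injective_module_of_injective_object R _
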